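/- Let $A$ be a commutative ring, $I \subseteq A$ an ideal, $S \subseteq A$ an archimedean subsemiring (i.e., $A = \mathbb{Z} + S$), and $M \subseteq I$ an $S$-pseudomodule such that $(I, M)$ has an order unit $u$. Then every pure state $\varphi$ of $(I, M, u)$ satisfies $\varphi(ab) = \varphi(au) \cdot \varphi(b)$ for all $a \in A$ and $b \in I$. -/

import Mathlib

/-- Pure states on ideals over archimedean semirings are multiplicative:
if `S ⊆ A` is an archimedean subsemiring, `M ⊆ I` an `S`-pseudomodule with order
unit `u` of `(I,M)`, then every pure state `φ` of `(I,M,u)` satisfies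
`φ(ab) = φ(au)·φ(b)` for all `a ∈ A`, `b ∈ I`. -/
theorem pureState_multiplicative_of_archimedean {A : Type*} [CommRing A]
    (I : Ideal A) (S M : Set A)
    (hS0 : (0 : A) ∈ S) (hS1 : (1 : A) ∈ S)
    (hSadd : ∀ x ∈ S, ∀ y ∈ S, x + y ∈ S)
    (hSmul : ∀ x ∈ S, ∀ y ∈ S, x * y ∈ S)
    (harch : ∀ a : A, ∃ n : ℕ, (n : A) - a ∈ S)
    (hMI : M ⊆ (I : Set A))
    (hM0 : (0 : A) ∈ M) (hMadd : ∀ x ∈ M, ∀ y ∈ M, x + y ∈ M)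
    (hSM : ∀ s ∈ S, ∀ m ∈ M, s * m ∈ M)
    (u : A) (hu : u ∈ M)
    (hord : ∀ x ∈ I, ∃ m ∈ M, ∃ n : ℤ, x = m + n • u)
    (φ : I →+ ℝ)
    (hstate : ∀ x : I, (x : A) ∈ M → 0 ≤ φ x)
    (hmonic : φ ⟨u, hMI hu⟩ = 1)
    (hpure : ∀ φ₁ φ₂ : I →+ ℝ,
      ((∀ x : I, (x : A) ∈ M → 0 ≤ φ₁ x) ∧ φ₁ ⟨u, hMI hu⟩ = 1) →
      ((∀ x : I, (x : A) ∈ M → 0 ≤ φ₂ x) ∧ φ₂ ⟨u, hMI hu⟩ = 1) →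
      φ₁ + φ₂ = 2 • φ → φ₁ = φ) :
    ∀ (a : A) (b : I), φ (a • b) = φ ⟨a * u, I.mul_mem_left a (hMI hu)⟩ * φ b := by
  set ue : I := ⟨u, hMI hu⟩ with hue
  have zero_lem : ∀ ψ : I →+ ℝ, (∀ x : I, (x : A) ∈ M → 0 ≤ ψ x) → ψ ue = 0 →
      ∀ x, ψ x = 0 := by
    intro ψ hpos hψu
    have nonneg : ∀ x, 0 ≤ ψ x := by
      intro x
      obtain ⟨m, hm, k, hx⟩ := hord x x.2
      have hx' : x = ⟨m, hMI hm⟩ + k • ue := by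
        apply Subtype.ext; simpa using hx
      rw [hx', map_add, map_zsmul, hψu]
      simpa using hpos ⟨m, hMI hm⟩ hm
    intro x
    have h1 := nonneg x
    have h2 := nonneg (-x)
    rw [map_neg] at h2
    linarith
  have half : ∀ p q : I →+ ℝ,
      ((∀ x : I, (x : A) ∈ M → 0 ≤ p x) ∧ p ue = 1) →
      ((∀ x : I, (x : A) ∈ M → 0 ≤ q x) ∧ q ue = 1) →
      ∀ t : ℝ, 0 < t → t ≤ 1/2 → (∀ x, t * p x + (1 - t) * q x = φ x) →
      ∀ x, p x = q x := by
    intro p q hp hq t ht ht2 hφx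
    set pa : I →+ ℝ := (2 * t) • p + (1 - 2 * t) • q with hpa
    have hpax : ∀ x, pa x = 2 * t * p x + (1 - 2 * t) * q x := fun x => rfl
    have hpaφ : pa = φ := by
      apply hpure pa q
      · refine ⟨fun x hx => ?_, ?_⟩
        · have h1 : 0 ≤ 2 * t * p x := mul_nonneg (by linarith) (hp.1 x hx)
          have h2 : 0 ≤ (1 - 2 * t) * q x := mul_nonneg (by linarith) (hq.1 x hx)
          rw [hpax]; linarith
        · rw [hpax, hp.2, hq.2]; ring
      · exact hq
      · ext x
        show pa x + q x = (2 • φ) x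
        have h2φ : (2 • φ) x = 2 * φ x := by
          simp [two_nsmul]; ring
        rw [hpax, h2φ]
        linarith [hφx x]
    intro x
    have h1 : pa x = φ x := by rw [hpaφ]
    rw [hpax] at h1
    have h2 := hφx x
    have h3 : t * p x = t * q x := by linarith
    exact mul_left_cancel₀ (ne_of_gt ht) h3
  have key : ∀ ψ χ : I →+ ℝ,
      (∀ x : I, (x : A) ∈ M → 0 ≤ ψ x) → (∀ x : I, (x : A) ∈ M → 0 ≤ χ x) →
      (∀ x, ψ x + χ x = (ψ ue + χ ue) * φ x) → ∀ x, ψ x = ψ ue * φ x := by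
    intro ψ χ hψ hχ hsum
    set c := ψ ue with hc
    set d := χ ue with hd
    have hc0 : 0 ≤ c := hψ ue hu
    have hd0 : 0 ≤ d := hχ ue hu
    rcases eq_or_lt_of_le hc0 with hc1 | hc1
    · intro x
      rw [zero_lem ψ hψ hc1.symm x, ← hc1]; ring
    rcases eq_or_lt_of_le hd0 with hd1 | hd1
    · intro x
      have hχ0 := zero_lem χ hχ hd1.symm x
      have h := hsum x
      rw [hχ0, ← hd1] at h
      linarith
    have hr : 0 < c + d
    · linarith
    have hrne : (c + d) ≠ 0 := ne_of_gt hr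
    set p : I →+ ℝ := c⁻¹ • ψ with hp
    set q : I →+ ℝ := d⁻¹ • χ with hq
    have hpx : ∀ x, p x = c⁻¹ * ψ x := fun x => rfl
    have hqx : ∀ x, q x = d⁻¹ * χ x := fun x => rfl
    have hpst : (∀ x : I, (x : A) ∈ M → 0 ≤ p x) ∧ p ue = 1 := by
      refine ⟨fun x hx => ?_, ?_⟩
      · rw [hpx]; exact mul_nonneg (le_of_lt (inv_pos.mpr hc1)) (hψ x hx)
      · rw [hpx, ← hc]; field_simp
    have hqst : (∀ x : I, (x : A) ∈ M → 0 ≤ q x) ∧ q ue = 1 := by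
      refine ⟨fun x hx => ?_, ?_⟩
      · rw [hqx]; exact mul_nonneg (le_of_lt (inv_pos.mpr hd1)) (hχ x hx)
      · rw [hqx, ← hd]; field_simp
    set t : ℝ := c / (c + d) with htdef
    have ht0 : 0 < t := div_pos hc1 hr
    have ht1 : t < 1 := by
      rw [htdef, div_lt_one hr]; linarith
    have e1 : t * c⁻¹ = (c + d)⁻¹ := by
      rw [htdef]; field_simp
    have e2 : (1 - t) * d⁻¹ = (c + d)⁻¹ := by
      have h1t : 1 - t = d / (c + d) := by
        rw [htdef]; field_simp; ring
      rw [h1t]; field_simp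
    have hconv : ∀ x, t * p x + (1 - t) * q x = φ x := by
      intro x
      rw [hpx, hqx, ← mul_assoc, ← mul_assoc, e1, e2, ← mul_add, hsum x]
      exact inv_mul_cancel_left₀ hrne _
    have hpq : ∀ x, p x = q x := by
      rcases le_or_gt t (1/2) with h | h
      · exact half p q hpst hqst t ht0 h hconv
      · intro x
        refine (half q p hqst hpst (1 - t) (by linarith) (by linarith) ?_ x).symm
        intro y
        have := hconv y
        linarith
    have hpφ : ∀ x, p x = φ x := by
      intro x
      have h := hconv x
      rw [← hpq x] at h
      linarith
    intro x
    have h := hpφ x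
    rw [hpx] at h
    have : ψ x = c * (c⁻¹ * ψ x) := by
      rw [← mul_assoc, mul_inv_cancel₀ (ne_of_gt hc1), one_mul]
    rw [this, h]
  have hSmult : ∀ s ∈ S, ∀ b : I,
      φ (s • b) = φ ⟨s * u, I.mul_mem_left s (hMI hu)⟩ * φ b := by
    intro s hs b
    obtain ⟨n, hn⟩ := harch s
    set ψ : I →+ ℝ := AddMonoidHom.mk' (fun x => φ (s • x))
      (fun x y => by show φ (s • (x + y)) = φ (s • x) + φ (s • y)
                     rw [smul_add, map_add]) with hψ
    set χ : I →+ ℝ := AddMonoidHom.mk' (fun x => φ (((n : A) - s) • x))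
      (fun x y => by show φ (((n : A) - s) • (x + y)) = _
                     rw [smul_add, map_add]) with hχ
    have hψx : ∀ x, ψ x = φ (s • x) := fun x => rfl
    have hχx : ∀ x, χ x = φ (((n : A) - s) • x) := fun x => rfl
    have hψpos : ∀ x : I, (x : A) ∈ M → 0 ≤ ψ x :=
      fun x hx => hstate (s • x) (hSM s hs x hx)
    have hχpos : ∀ x : I, (x : A) ∈ M → 0 ≤ χ x :=
      fun x hx => hstate _ (hSM _ hn x hx)
    have hnx : ∀ x : I, φ ((n : A) • x) = n * φ x := by
      intro x
      rw [Nat.cast_smul_eq_nsmul, map_nsmul, nsmul_eq_mul]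
    have hadd : ∀ x : I, ψ x + χ x = n * φ x := by
      intro x
      rw [hψx, hχx, ← map_add, ← add_smul]
      have h3 : s + ((n : A) - s) = (n : A) := by ring
      rw [h3, hnx]
    have hsum : ∀ x, ψ x + χ x = (ψ ue + χ ue) * φ x := by
      intro x
      have h2 : ψ ue + χ ue = n := by rw [hadd ue, hmonic, mul_one]
      rw [hadd x, h2]
    have hk := key ψ χ hψpos hχpos hsum b
    rw [hψx] at hk
    rw [hk, hψx]
    congr 2
  intro a b
  obtain ⟨n, hn⟩ := harch a
  set s := (n : A) - a with hsdef
  have ha : a • b = (n : A) • b - s • b := by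
    rw [hsdef, sub_smul, sub_sub_cancel]
  have hnx : ∀ x : I, φ ((n : A) • x) = n * φ x := by
    intro x
    rw [Nat.cast_smul_eq_nsmul, map_nsmul, nsmul_eq_mul]
  have hau : (⟨a * u, I.mul_mem_left a (hMI hu)⟩ : I)
      = (n : A) • ue - s • ue := by
    apply Subtype.ext
    show a * u = (n : A) * u - s * u
    rw [hsdef]; ring
  rw [ha, map_sub, hnx, hSmult s hn b, hau, map_sub, hnx, hmonic]
  have hse : φ (s • ue) = φ ⟨s * u, I.mul_mem_left s (hMI hu)⟩ := by congr 1
  rw [hse]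
  ring
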